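/- If a finite graph G is dismantlable, then its k-th power G^k is dismantlable for every k ≥ 1. -/

import Mathlib

/-- A finite graph is dismantlable if its vertices admit a dismantling order. -/
def DismantlableGraph {V : Type*} [Fintype V] (G : SimpleGraph V) : Prop :=
  ∃ (n : ℕ) (e : Fin n ≃ V),
    ∀ i : Fin n, (i : ℕ) + 1 < n →
      ∃ j : Fin n, (i : ℕ) < (j : ℕ) ∧
        ∀ x : Fin n, (i : ℕ) ≤ (x : ℕ) →
          (e x = e i ∨ G.Adj (e x) (e i)) → (e x = e j ∨ G.Adj (e x) (e j))

/-- Walk surgery: if every `S`-neighbor of `v` is equal or adjacent to `u`, then any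
walk with support in `S` and endpoints different from `v` can be replaced by one of
no greater length avoiding `v`. -/
lemma avoid_walk {V : Type*} (G : SimpleGraph V) (S : Set V) (v u : V)
    (huS : u ∈ S) (huv : u ≠ v)
    (hdom : ∀ w ∈ S, G.Adj w v → w = u ∨ G.Adj w u) :
    ∀ (m : ℕ) {a b : V} (p : G.Walk a b), p.length ≤ m → a ≠ v → b ≠ v →
      (∀ w ∈ p.support, w ∈ S) →
      ∃ q : G.Walk a b, q.length ≤ p.length ∧ ∀ w ∈ q.support, w ∈ S ∧ w ≠ v := by
  intro m
  induction m with
  | zero =>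
    intro a b p hp ha hb hS
    cases p with
    | nil => exact ⟨.nil, le_rfl, by simpa using ⟨hS a (by simp), ha⟩⟩
    | cons h p' => simp at hp
  | succ m ih =>
    intro a b p hp ha hb hS
    cases p with
    | nil => exact ⟨.nil, le_rfl, by simpa using ⟨hS a (by simp), ha⟩⟩
    | cons h p' =>
      rename_i c
      by_cases hc : c = v
      · subst hc
        cases p' with
        | nil => exact absurd rfl hb
        | cons h2 p'' =>
          rename_i d
          have hd : d ≠ c := fun hdv => h2.ne hdv.symm
          have haS : a ∈ S := hS a (by simp)
          have hdS : d ∈ S := hS d (by simp)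
          have hp'' : p''.length ≤ m := by
            simp only [SimpleGraph.Walk.length_cons] at hp; omega
          obtain ⟨q'', hq''len, hq''S⟩ := ih p'' hp'' hd hb
            (fun z hz => hS z (by simp [hz]))
          have ha' := hdom a haS h
          have hd' := hdom d hdS h2.symm
          rcases ha' with hau | hau
          · rcases hd' with hdu | hdu
            · -- a = u and d = u, so a = d
              have had : d = a := hdu.trans hau.symm
              refine ⟨had ▸ q'', ?_, ?_⟩
              · subst had; simpa using by omega
              · subst had; simpa using hq''S
            · -- a = u, d adj u, so d adj a
              refine ⟨.cons (hau ▸ hdu.symm) q'', by simp; omega, ?_⟩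
              intro z hz
              rcases (by simpa using hz : z = a ∨ z ∈ q''.support) with rfl | hz'
              · exact ⟨haS, ha⟩
              · exact hq''S z hz'
          · rcases hd' with hdu | hdu
            · -- a adj u, d = u
              refine ⟨.cons (hdu ▸ hau) q'', by simp; omega, ?_⟩
              intro z hz
              rcases (by simpa using hz : z = a ∨ z ∈ q''.support) with rfl | hz'
              · exact ⟨haS, ha⟩
              · exact hq''S z hz'
            · -- a adj u, d adj u
              refine ⟨.cons hau (.cons hdu.symm q''), by simp; omega, ?_⟩
              intro z hz
              rcases (by simpa using hz : z = a ∨ z = u ∨ z ∈ q''.support) with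
                rfl | rfl | hz'
              · exact ⟨haS, ha⟩
              · exact ⟨huS, huv⟩
              · exact hq''S z hz'
      · have hp' : p'.length ≤ m := by
          simp only [SimpleGraph.Walk.length_cons] at hp; omega
        obtain ⟨q', hq'len, hq'S⟩ := ih p' hp' hc hb (fun z hz => hS z (by simp [hz]))
        have haS : a ∈ S := hS a (by simp)
        refine ⟨.cons h q', by simpa using hq'len, ?_⟩
        intro z hz
        rcases (by simpa using hz : z = a ∨ z ∈ q'.support) with rfl | hz'
        · exact ⟨haS, ha⟩
        · exact hq'S z hz'

/-- Any walk between two vertices of index `≥ i` can be replaced by one of no greater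
length whose support consists of vertices of index `≥ i`. -/
lemma suffix_walk {V : Type*} [Fintype V] (G : SimpleGraph V) (n : ℕ) (e : Fin n ≃ V)
    (hG : ∀ i : Fin n, (i : ℕ) + 1 < n →
      ∃ j : Fin n, (i : ℕ) < (j : ℕ) ∧
        ∀ x : Fin n, (i : ℕ) ≤ (x : ℕ) →
          (e x = e i ∨ G.Adj (e x) (e i)) → (e x = e j ∨ G.Adj (e x) (e j))) :
    ∀ (i : ℕ) {a b : V}, i ≤ (e.symm a : ℕ) → i ≤ (e.symm b : ℕ) → ∀ p : G.Walk a b,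
      ∃ q : G.Walk a b, q.length ≤ p.length ∧ ∀ w ∈ q.support, i ≤ (e.symm w : ℕ) := by
  intro i
  induction i with
  | zero => exact fun _ _ p => ⟨p, le_rfl, fun _ _ => Nat.zero_le _⟩
  | succ i ih =>
    intro a b ha hb p
    obtain ⟨q, hqlen, hqS⟩ := ih (Nat.le_of_succ_le ha) (Nat.le_of_succ_le hb) p
    have hin : i + 1 < n := lt_of_le_of_lt ha (e.symm a).isLt
    set iF : Fin n := ⟨i, by omega⟩ with hiF
    obtain ⟨j, hij, hdom⟩ := hG iF hin
    have hjS : i ≤ (e.symm (e j) : ℕ) := by rw [e.symm_apply_apply]; exact le_of_lt hij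
    have hjv : e j ≠ e iF := by
      intro hEq
      have := e.injective hEq
      subst this
      exact lt_irrefl _ hij
    have hdom' : ∀ w ∈ {w : V | i ≤ (e.symm w : ℕ)}, G.Adj w (e iF) →
        w = e j ∨ G.Adj w (e j) := by
      intro w hw hadj
      have := hdom (e.symm w) hw (Or.inr (by simpa using hadj))
      simpa using this
    have hidx : ∀ w : V, i ≤ (e.symm w : ℕ) → w ≠ e iF → i + 1 ≤ (e.symm w : ℕ) := by
      intro w hw hwv
      rcases Nat.lt_or_ge i (e.symm w : ℕ) with h | h
      · omega
      · exfalso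
        apply hwv
        have : e.symm w = iF := Fin.ext (le_antisymm h hw)
        rw [← this, e.apply_symm_apply]
    have hav : a ≠ e iF := by
      intro hEq
      have : e.symm a = iF := by rw [hEq, e.symm_apply_apply]
      rw [this] at ha
      simp [hiF] at ha
    have hbv : b ≠ e iF := by
      intro hEq
      have : e.symm b = iF := by rw [hEq, e.symm_apply_apply]
      rw [this] at hb
      simp [hiF] at hb
    obtain ⟨q', hq'len, hq'S⟩ := avoid_walk G {w : V | i ≤ (e.symm w : ℕ)} (e iF) (e j)
      hjS hjv hdom' q.length q le_rfl hav hbv hqS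
    exact ⟨q', le_trans hq'len hqlen, fun w hw =>
      hidx w (hq'S w hw).1 (hq'S w hw).2⟩

/-- If a finite connected graph G is dismantlable, then its k-th power G^k is
dismantlable, for every k ≥ 1. -/
theorem stmt10 {V : Type*} [Fintype V] (G : SimpleGraph V) (hconn : G.Connected)
    (hG : DismantlableGraph G) (k : ℕ) (hk : 1 ≤ k) :
    DismantlableGraph (SimpleGraph.fromRel fun x y => G.dist x y ≤ k) := by
  obtain ⟨n, e, he⟩ := hG
  refine ⟨n, e, ?_⟩
  intro i hi
  obtain ⟨j, hij, hdom⟩ := he i hi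
  refine ⟨j, hij, ?_⟩
  intro x hx hadj
  by_cases hxj : e x = e j
  · exact Or.inl hxj
  rcases hadj with hxi | hxi
  · -- e x = e i : show e i related to e j
    rw [hxi]
    rcases hdom i le_rfl (Or.inl rfl) with h | h
    · exact Or.inl (hxi ▸ h)
    · refine Or.inr ⟨hxi ▸ hxj, Or.inl ?_⟩
      calc G.dist (e i) (e j) ≤ h.toWalk.length := SimpleGraph.dist_le _
        _ ≤ k := by simpa using hk
  · -- (fromRel _).Adj (e x) (e i)
    rw [SimpleGraph.fromRel_adj] at hxi
    obtain ⟨hne, hd⟩ := hxi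
    have hdist : G.dist (e x) (e i) ≤ k := by
      rcases hd with h | h
      · exact h
      · rwa [SimpleGraph.dist_comm]
    obtain ⟨p, hp⟩ := (hconn.preconnected (e x) (e i)).exists_walk_length_eq_dist
    obtain ⟨q, hqlen, hqS⟩ := suffix_walk G n e he (i : ℕ)
      (by simpa using hx) (by simp) p
    have hqk : q.length ≤ k := le_trans hqlen (hp ▸ hdist)
    -- q is nonempty since e x ≠ e i
    obtain ⟨w, h2, r, hq⟩ := SimpleGraph.Walk.exists_eq_cons_of_ne
      (fun h => hne h.symm) q.reverse
    -- h2 : G.Adj (e i) w, r : G.Walk w (e x)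
    · 
      have hwS : (i : ℕ) ≤ (e.symm w : ℕ) := by
        apply hqS
        have : w ∈ q.reverse.support := by rw [hq]; simp
        simpa using this
      have hrlen : r.length + 1 = q.length := by
        have := congrArg SimpleGraph.Walk.length hq
        simpa using this.symm
      have hdxw : G.dist (e x) w ≤ q.length - 1 := by
        have : G.dist (e x) w ≤ r.reverse.length := SimpleGraph.dist_le _
        simpa [← hrlen] using this
      have := hdom (e.symm w) hwS (Or.inr (by simpa using h2.symm))
      rw [e.apply_symm_apply] at this
      have hdxj : G.dist (e x) (e j) ≤ k := by
        rcases this with hwj | hwj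
        · calc G.dist (e x) (e j) = G.dist (e x) w := by rw [hwj]
            _ ≤ q.length - 1 := hdxw
            _ ≤ k := by omega
        · calc G.dist (e x) (e j) ≤ G.dist (e x) w + G.dist w (e j) :=
              hconn.dist_triangle
            _ ≤ (q.length - 1) + hwj.toWalk.length := by
              exact Nat.add_le_add hdxw (SimpleGraph.dist_le _)
            _ ≤ (q.length - 1) + 1 := by simp
            _ ≤ k := by
              have hq1 : 1 ≤ q.length := by omega
              omega
      exact Or.inr ⟨hxj, Or.inl hdxj⟩
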